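/- arXiv:1206.4598 — 2 statements merged into one kernel-verified Lean document; each statement's English description precedes it below -/
import Mathlib

section
/- Let Φ : B^3 → B^3 be defined by Φ(μ₁,μ₂,μ₃) = ((μ₂∧μ₃) ⊕ μ₁ ⊕ μ₂, (μ₁∧μ₃) ⊕ μ₂ ⊕ μ₃, (μ₁∧μ₂) ⊕ μ₁ ⊕ μ₃), and let σ be the cyclic permutation of {1,2,3} with σ(1)=3, σ(2)=1, σ(3)=2, inducing π_σ : B^3 → B^3, π_σ(μ₁,μ₂,μ₃) = (μ_{σ(1)}, μ_{σ(2)}, μ_{σ(3)}). Then (π_σ, π_σ) is an automorphism of Φ: π_σ ∘ Φ^ν = Φ^{π_σ(ν)} ∘ π_σ for all ν ∈ B^3. -/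
def asy3 (Φ : Bool × Bool × Bool → Bool × Bool × Bool) (ν μ : Bool × Bool × Bool) :
    Bool × Bool × Bool :=
  (if ν.1 then (Φ μ).1 else μ.1,
   if ν.2.1 then (Φ μ).2.1 else μ.2.1,
   if ν.2.2 then (Φ μ).2.2 else μ.2.2)

theorem stmt12 (Φ πσ : Bool × Bool × Bool → Bool × Bool × Bool)
    (hΦ : ∀ μ : Bool × Bool × Bool,
      Φ μ = (xor (xor (μ.2.1 && μ.2.2) μ.1) μ.2.1,
             xor (xor (μ.1 && μ.2.2) μ.2.1) μ.2.2,
             xor (xor (μ.1 && μ.2.1) μ.1) μ.2.2))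
    (hπ : ∀ μ : Bool × Bool × Bool, πσ μ = (μ.2.2, μ.1, μ.2.1)) :
    Function.Bijective πσ ∧ ∀ ν, πσ ∘ asy3 Φ ν = asy3 Φ (πσ ν) ∘ πσ := by
  constructor
  · rw [Function.bijective_iff_has_inverse]
    exact ⟨fun μ => (μ.2.1, μ.2.2, μ.1), fun μ => by simp [hπ], fun μ => by simp [hπ]⟩
  · intro ν
    funext μ
    obtain ⟨a, b, c⟩ := ν
    obtain ⟨x, y, z⟩ := μ
    simp only [Function.comp_apply, asy3, hΦ, hπ]
    cases a <;> cases b <;> cases c <;> cases x <;> cases y <;> cases z <;> rfl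
end

section
/- Let Φ : B^n → B^n and λ ∈ B^n. The pair (θ^λ, id) is an automorphism of Φ (i.e., θ^λ ∘ Φ^ν = Φ^ν ∘ θ^λ for all ν ∈ B^n) if and only if for all μ ∈ B^n, Φ(μ ⊕ λ) = Φ(μ) ⊕ λ. -/
def asy {n : ℕ} (Φ : (Fin n → Bool) → (Fin n → Bool)) (ν : Fin n → Bool)
    (μ : Fin n → Bool) : Fin n → Bool :=
  fun i => if ν i then Φ μ i else μ i

def theta {n : ℕ} (l : Fin n → Bool) (μ : Fin n → Bool) : Fin n → Bool :=
  fun i => xor (μ i) (l i)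

theorem stmt14 {n : ℕ} (Φ : (Fin n → Bool) → (Fin n → Bool)) (l : Fin n → Bool) :
    (∀ ν, theta l ∘ asy Φ ν = asy Φ ν ∘ theta l) ↔
      ∀ μ, Φ (theta l μ) = theta l (Φ μ) := by
  constructor
  · intro h μ
    have := congrFun (h (fun _ => true)) μ
    funext i
    have := congrFun this i
    simp [asy, theta, Function.comp] at this ⊢
    simpa [Bool.xor_comm] using this.symm
  · intro h ν
    funext μ
    funext i
    simp only [Function.comp, asy, theta]
    by_cases hν : ν i
    · simp [hν, congrFun (h μ) i, theta, Bool.xor_comm]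
    · simp [hν]
end
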